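/- Two DAGs G and H on the same vertex set have equal characteristic imsets if and only if c_G(S) = c_H(S) for all subsets S of size 2 or 3. -/

import Mathlib

def Acyclic {V : Type*} (R : V → V → Prop) : Prop :=
  ∀ v, ¬ Relation.TransGen R v v

open Classical in
noncomputable def cimset {V : Type*} (G : V → V → Prop) (S : Finset V) : ℕ :=
  if ∃ i ∈ S, ∀ j ∈ S, j ≠ i → G j i then 1 else 0

def VStruct {V : Type*} (G : V → V → Prop) (a j c : V) : Prop :=
  a ≠ c ∧ G a j ∧ G c j ∧ ¬ G a c ∧ ¬ G c a

def skel {V : Type*} (G : V → V → Prop) : SimpleGraph V where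
  Adj a b := (G a b ∨ G b a) ∧ a ≠ b
  symm := ⟨fun a b h => ⟨h.1.symm, h.2.symm⟩⟩
  loopless := ⟨fun a h => h.2 rfl⟩

/-- Helper: equality of 0/1 indicators gives an iff. -/
lemma my_ite_one_zero {P Q : Prop} {iP : Decidable P} {iQ : Decidable Q}
    (h : (@ite ℕ P iP 1 0) = @ite ℕ Q iQ 1 0) : P ↔ Q := by
  by_cases hP : P <;> by_cases hQ : Q <;> simp_all

lemma my_ite_congr {P Q : Prop} {iP : Decidable P} {iQ : Decidable Q}
    (h : P ↔ Q) : (@ite ℕ P iP 1 0) = @ite ℕ Q iQ 1 0 := by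
  by_cases hP : P <;> by_cases hQ : Q <;> simp_all

/-- Characterization of the cimset condition on a pair. -/
lemma my_expair {V : Type*} [DecidableEq V] (G : V → V → Prop) {a b : V} (hab : a ≠ b) :
    (∃ i ∈ ({a, b} : Finset V), ∀ j ∈ ({a, b} : Finset V), j ≠ i → G j i) ↔
      (G a b ∨ G b a) := by
  simp only [Finset.mem_insert, Finset.mem_singleton]
  constructor
  · rintro ⟨i, (rfl | rfl), hall⟩
    · exact Or.inr (hall b (Or.inr rfl) hab.symm)
    · exact Or.inl (hall a (Or.inl rfl) hab)
  · rintro (h1 | h1)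
    · refine ⟨b, Or.inr rfl, ?_⟩
      rintro j (rfl | rfl) hj
      · exact h1
      · exact absurd rfl hj
    · refine ⟨a, Or.inl rfl, ?_⟩
      rintro j (rfl | rfl) hj
      · exact absurd rfl hj
      · exact h1

/-- Characterization of the cimset condition on a triple. -/
lemma my_extriple {V : Type*} [DecidableEq V] (G : V → V → Prop) {a b c : V}
    (hab : a ≠ b) (hac : a ≠ c) (hbc : b ≠ c) :
    (∃ i ∈ ({a, b, c} : Finset V), ∀ j ∈ ({a, b, c} : Finset V), j ≠ i → G j i) ↔
      ((G b a ∧ G c a) ∨ (G a b ∧ G c b) ∨ (G a c ∧ G b c)) := by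
  simp only [Finset.mem_insert, Finset.mem_singleton]
  constructor
  · rintro ⟨i, (rfl | rfl | rfl), hall⟩
    · exact Or.inl ⟨hall b (Or.inr (Or.inl rfl)) hab.symm, hall c (Or.inr (Or.inr rfl)) hac.symm⟩
    · exact Or.inr (Or.inl ⟨hall a (Or.inl rfl) hab, hall c (Or.inr (Or.inr rfl)) hbc.symm⟩)
    · exact Or.inr (Or.inr ⟨hall a (Or.inl rfl) hac, hall b (Or.inr (Or.inl rfl)) hbc⟩)
  · rintro (⟨h1, h2⟩ | ⟨h1, h2⟩ | ⟨h1, h2⟩)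
    · refine ⟨a, Or.inl rfl, ?_⟩
      rintro j (rfl | rfl | rfl) hj
      · exact absurd rfl hj
      · exact h1
      · exact h2
    · refine ⟨b, Or.inr (Or.inl rfl), ?_⟩
      rintro j (rfl | rfl | rfl) hj
      · exact h1
      · exact absurd rfl hj
      · exact h2
    · refine ⟨c, Or.inr (Or.inr rfl), ?_⟩
      rintro j (rfl | rfl | rfl) hj
      · exact h1
      · exact h2
      · exact absurd rfl hj

/-- Same skeleton: adjacency transfers from G to H. -/
lemma my_pair_iff {V : Type*} [DecidableEq V] {G H : V → V → Prop}
    (h : ∀ S : Finset V, (S.card = 2 ∨ S.card = 3) → cimset G S = cimset H S)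
    {a b : V} (hab : a ≠ b) : (G a b ∨ G b a) ↔ (H a b ∨ H b a) := by
  classical
  have h2 := h {a, b} (Or.inl (Finset.card_pair hab))
  simp only [cimset] at h2
  have h3 := my_ite_one_zero h2
  rwa [my_expair G hab, my_expair H hab] at h3

/-- V-structures transfer from G to H. -/
lemma my_vtrans {V : Type*} [DecidableEq V] {G H : V → V → Prop}
    (h : ∀ S : Finset V, (S.card = 2 ∨ S.card = 3) → cimset G S = cimset H S)
    {a c m : V} (hac : a ≠ c) (ham : a ≠ m) (hcm : c ≠ m)
    (hGa : G a m) (hGc : G c m) (hnadj : ¬ (G a c ∨ G c a)) : H a m ∧ H c m := by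
  classical
  have hHnadj : ¬ (H a c ∨ H c a) := fun hh => hnadj ((my_pair_iff h hac).mpr hh)
  have hcard : ({a, c, m} : Finset V).card = 3 := by
    rw [Finset.card_insert_of_notMem (by simp [hac, ham]), Finset.card_pair hcm]
  have h3 := h {a, c, m} (Or.inr hcard)
  simp only [cimset] at h3
  have hiff := my_ite_one_zero h3
  rw [my_extriple G hac ham hcm, my_extriple H hac ham hcm] at hiff
  have hG3 : (G c a ∧ G m a) ∨ (G a c ∧ G m c) ∨ (G a m ∧ G c m) :=
    Or.inr (Or.inr ⟨hGa, hGc⟩)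
  rcases hiff.mp hG3 with ⟨h1, _⟩ | ⟨h1, _⟩ | hm
  · exact absurd (Or.inr h1) hHnadj
  · exact absurd (Or.inl h1) hHnadj
  · exact hm

/-- A finite nonempty set has a maximal element w.r.t. an acyclic relation. -/
lemma my_exists_max {V : Type*} {R : V → V → Prop} (hR : Acyclic R) :
    ∀ A : Finset V, A.Nonempty → ∃ m ∈ A, ∀ a ∈ A, ¬ Relation.TransGen R m a := by
  classical
  intro A
  induction A using Finset.induction_on with
  | empty => rintro ⟨x, hx⟩; simp at hx
  | @insert a A' ha ih =>
    intro _
    rcases A'.eq_empty_or_nonempty with rfl | hA'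
    · refine ⟨a, Finset.mem_insert_self _ _, ?_⟩
      intro x hx
      have hx' : x = a := by simpa using hx
      subst hx'
      exact hR x
    · obtain ⟨m, hm, hmax⟩ := ih hA'
      by_cases hma : Relation.TransGen R m a
      · refine ⟨a, Finset.mem_insert_self _ _, ?_⟩
        intro x hx hax
        rcases Finset.mem_insert.mp hx with rfl | hx'
        · exact hR x hax
        · exact hmax x hx' (hma.trans hax)
      · refine ⟨m, Finset.mem_insert_of_mem hm, ?_⟩
        intro x hx
        rcases Finset.mem_insert.mp hx with rfl | hx'
        · exact hma
        · exact hmax x hx'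

/-- Main lemma: a cimset witness for G yields one for H. -/
lemma my_key {V : Type*} [DecidableEq V] {G H : V → V → Prop} (hH : Acyclic H)
    (h : ∀ S : Finset V, (S.card = 2 ∨ S.card = 3) → cimset G S = cimset H S)
    {S : Finset V} {i : V} (hi : i ∈ S) (hpar : ∀ j ∈ S, j ≠ i → G j i) :
    ∃ m ∈ S, ∀ j ∈ S, j ≠ m → H j m := by
  classical
  have adj : ∀ j ∈ S, j ≠ i → (H j i ∨ H i j) := fun j hj hji =>
    (my_pair_iff h hji).mp (Or.inl (hpar j hj hji))
  have vt : ∀ j ∈ S, ∀ k ∈ S, j ≠ i → k ≠ i → j ≠ k →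
      ¬ (H j k ∨ H k j) → H j i ∧ H k i := by
    intro j hj k hk hji hki hjk hn
    have hGn : ¬ (G j k ∨ G k j) := fun hg => hn ((my_pair_iff h hjk).mp hg)
    exact my_vtrans h hjk hji hki (hpar j hj hji) (hpar k hk hki) hGn
  set A := S.filter (fun j => j ≠ i ∧ H i j) with hA
  rcases A.eq_empty_or_nonempty with hAe | hAne
  · refine ⟨i, hi, fun j hj hji => ?_⟩
    rcases adj j hj hji with hji' | hij
    · exact hji'
    · exfalso
      have : j ∈ A := Finset.mem_filter.mpr ⟨hj, hji, hij⟩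
      rw [hAe] at this
      simp at this
  · obtain ⟨m, hmA, hmax⟩ := my_exists_max hH A hAne
    obtain ⟨hmS, hmi, him⟩ := Finset.mem_filter.mp hmA
    refine ⟨m, hmS, fun j hj hjm => ?_⟩
    by_cases hji : j = i
    · subst hji; exact him
    · have hadjm : H j m ∨ H m j := by
        by_contra hn
        obtain ⟨hji', hmi'⟩ := vt j hj m hmS hji hmi hjm hn
        exact hH i (Relation.TransGen.head him (Relation.TransGen.single hmi'))
      rcases hadjm with h1 | h2
      · exact h1
      · exfalso
        by_cases hjA : j ∈ A
        · exact hmax j hjA (Relation.TransGen.single h2)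
        · have hnij : ¬ H i j := fun hij => hjA (Finset.mem_filter.mpr ⟨hj, hji, hij⟩)
          have hjiH : H j i := (adj j hj hji).resolve_right hnij
          exact hH i (Relation.TransGen.head him
            (Relation.TransGen.head h2 (Relation.TransGen.single hjiH)))

theorem stmt15 {V : Type*} [DecidableEq V] (G H : V → V → Prop)
    (hG : Acyclic G) (hH : Acyclic H) :
    (∀ S : Finset V, 2 ≤ S.card → cimset G S = cimset H S) ↔
    (∀ S : Finset V, (S.card = 2 ∨ S.card = 3) → cimset G S = cimset H S) := by
  constructor
  · intro hall S hS
    exact hall S (by rcases hS with h2 | h3 <;> omega)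
  · intro h S _
    have h1 : (∃ i ∈ S, ∀ j ∈ S, j ≠ i → G j i) ↔ (∃ i ∈ S, ∀ j ∈ S, j ≠ i → H j i) := by
      constructor
      · rintro ⟨i, hi, hp⟩
        exact my_key hH h hi hp
      · rintro ⟨i, hi, hp⟩
        exact my_key hG (fun S hS => (h S hS).symm) hi hp
    classical
    simp only [cimset]
    exact my_ite_congr h1
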